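/- The Wachspress coordinates φ_k on a strictly convex polygon satisfy linear precision: Σ_k φ_k(x)·x_k = x for every x in the interior of the polygon. -/
import Mathlib


/-- Dot product in the plane. -/
def dot (a b : ℝ × ℝ) : ℝ := a.1 * b.1 + a.2 * b.2

/-- 2×2 determinant of two plane vectors. -/
def cross (a b : ℝ × ℝ) : ℝ := a.1 * b.2 - a.2 * b.1

/-- Wachspress weight at vertex `k`: the two edges meeting at vertex `k` are
edge `k-1` (joining `v (k-1)` and `v k`, outward unit normal `nrm (k-1)`) and
edge `k` (joining `v k` and `v (k+1)`, outward unit normal `nrm k`). -/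
noncomputable def w {n : ℕ} [NeZero n] (v nrm : Fin n → ℝ × ℝ)
    (k : Fin n) (x : ℝ × ℝ) : ℝ :=
  cross (nrm (k - 1)) (nrm k) /
    (dot (v (k - 1) - x) (nrm (k - 1)) * dot (v k - x) (nrm k))

/-- Wachspress coordinate `φ_k = w_k / ∑ⱼ wⱼ`. -/
noncomputable def φ {n : ℕ} [NeZero n] (v nrm : Fin n → ℝ × ℝ)
    (k : Fin n) (x : ℝ × ℝ) : ℝ :=
  w v nrm k x / ∑ j : Fin n, w v nrm j x

/-- Linear precision of the Wachspress coordinates on a strictly convex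
polygon. -/
theorem wachspress_linear_precision {n : ℕ} [NeZero n] (hn : 3 ≤ n)
    (v nrm : Fin n → ℝ × ℝ)
    (hunit : ∀ i, (nrm i).1 ^ 2 + (nrm i).2 ^ 2 = 1)
    (horth : ∀ i, dot (v (i + 1) - v i) (nrm i) = 0)
    (hconv : ∀ i, 0 < cross (nrm (i - 1)) (nrm i))
    (x : ℝ × ℝ)
    (hint : ∀ i, 0 < dot (v i - x) (nrm i)) :
    ∑ k : Fin n, φ v nrm k x • v k = x := by
  classical
  have hne : ∀ i, dot (v i - x) (nrm i) ≠ 0 := fun i => (hint i).ne'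
  -- the key observation: dot (v k - x) (nrm (k-1)) = dot (v (k-1) - x) (nrm (k-1))
  have hdot : ∀ k : Fin n, dot (v k - x) (nrm (k - 1)) = dot (v (k - 1) - x) (nrm (k - 1)) := by
    intro k
    have h1 := horth (k - 1)
    have h2 : (k - 1) + 1 = k := sub_add_cancel k 1
    rw [h2] at h1
    have : dot (v k - x) (nrm (k - 1)) - dot (v (k - 1) - x) (nrm (k - 1)) =
        dot (v k - v (k - 1)) (nrm (k - 1)) := by
      simp [dot]; ring
    have := this.trans h1
    linarith
  -- the telescoping function
  set g : Fin n → ℝ × ℝ := fun i =>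
    ((-(nrm i).2) / dot (v i - x) (nrm i), (nrm i).1 / dot (v i - x) (nrm i)) with hg
  have key : ∀ k : Fin n, w v nrm k x • (v k - x) = g (k - 1) - g k := by
    intro k
    have hA : dot (v k - x) (nrm (k - 1)) ≠ 0 := by rw [hdot]; exact hne (k - 1)
    have hB : dot (v k - x) (nrm k) ≠ 0 := hne k
    have hw : w v nrm k x =
        cross (nrm (k - 1)) (nrm k) /
          (dot (v k - x) (nrm (k - 1)) * dot (v k - x) (nrm k)) := by
      rw [w, hdot]
    have hAe : cross (nrm (k - 1)) (nrm k) * (v k - x).1 =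
        -(nrm (k - 1)).2 * dot (v k - x) (nrm k)
          - dot (v k - x) (nrm (k - 1)) * -(nrm k).2 := by
      simp only [cross, dot, Prod.fst_sub, Prod.snd_sub]; ring
    have hBe : cross (nrm (k - 1)) (nrm k) * (v k - x).2 =
        (nrm (k - 1)).1 * dot (v k - x) (nrm k)
          - dot (v k - x) (nrm (k - 1)) * (nrm k).1 := by
      simp only [cross, dot, Prod.fst_sub, Prod.snd_sub]; ring
    apply Prod.ext
    · show w v nrm k x * (v k - x).1 = (g (k - 1)).1 - (g k).1
      simp only [hg]
      rw [← hdot k, hw, div_mul_eq_mul_div, hAe, div_sub_div _ _ hA hB]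
    · show w v nrm k x * (v k - x).2 = (g (k - 1)).2 - (g k).2
      simp only [hg]
      rw [← hdot k, hw, div_mul_eq_mul_div, hBe, div_sub_div _ _ hA hB]
  -- telescoping sum is zero
  have hsum0 : ∑ k : Fin n, w v nrm k x • (v k - x) = 0 := by
    have : ∑ k : Fin n, w v nrm k x • (v k - x) = ∑ k : Fin n, (g (k - 1) - g k) := by
      exact Finset.sum_congr rfl fun k _ => key k
    rw [this, Finset.sum_sub_distrib]
    have : ∑ k : Fin n, g (k - 1) = ∑ k : Fin n, g k :=
      Fintype.sum_equiv (Equiv.subRight (1 : Fin n)) _ _ (fun k => rfl)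
    rw [this, sub_self]
  -- positivity of the sum of weights
  have hwpos : ∀ k : Fin n, 0 < w v nrm k x := by
    intro k
    exact div_pos (hconv k) (mul_pos (hint (k - 1)) (hint k))
  have hS : 0 < ∑ j : Fin n, w v nrm j x :=
    Finset.sum_pos (fun j _ => hwpos j) (by simp [Finset.univ_nonempty])
  set S := ∑ j : Fin n, w v nrm j x with hSdef
  -- ∑ w_k • v_k = S • x
  have hwv : ∑ k : Fin n, w v nrm k x • v k = S • x := by
    have : ∑ k : Fin n, w v nrm k x • (v k - x) =
        (∑ k : Fin n, w v nrm k x • v k) - S • x := by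
      rw [hSdef, Finset.sum_smul, ← Finset.sum_sub_distrib]
      exact Finset.sum_congr rfl fun k _ => by rw [smul_sub]
    rw [hsum0] at this
    exact (sub_eq_zero.mp this.symm)
  -- conclude
  have : ∑ k : Fin n, φ v nrm k x • v k = S⁻¹ • ∑ k : Fin n, w v nrm k x • v k := by
    rw [Finset.smul_sum]
    refine Finset.sum_congr rfl fun k _ => ?_
    rw [φ, ← hSdef, div_eq_inv_mul, mul_smul]
  rw [this, hwv, smul_smul, inv_mul_cancel₀ hS.ne', one_smul]
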